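/- Let X ∈ St(m,r), let U_⊥ ∈ ℝ^{m×(m−r_A)} have orthonormal columns spanning the orthogonal complement of the column space of U where A = UΣVᵀ (compact SVD). Let Y ∈ St(n,r), Θ = XᵀAY, E = −(I_m − XXᵀ)AYΘᵀ, η ∈ (0,1), and define X⁺ = (X − ηE)(I_r + η²EᵀE)^{−1/2}. Let Ω = U_⊥ᵀX and Ω⁺ = U_⊥ᵀX⁺. If σ₁(ΘΘᵀ) ≤ 1, then Ω⁺(Ω⁺)ᵀ ⪯ ΩΩᵀ. -/

import Mathlib

open Matrix

/-- Spectral norm of a real matrix: square root of the largest eigenvalue of `Mᵀ M`.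
For a positive semidefinite matrix this is its largest eigenvalue `σ₁`. -/
noncomputable def specNorm {a b : ℕ} (M : Matrix (Fin a) (Fin b) ℝ) : ℝ :=
  Real.sqrt (sSup {e : ℝ | Module.End.HasEigenvalue (Matrix.toLin' (Mᵀ * M)) e})

open scoped ComplexOrder in
/-- The positive semidefinite square root of a positive semidefinite matrix
(the definition `Matrix.PosSemidef.sqrt` of the older Mathlib, since removed). -/
noncomputable def Matrix.PosSemidef.sqrt {n 𝕜 : Type*} [Fintype n] [DecidableEq n] [RCLike 𝕜]
    {A : Matrix n n 𝕜} (hA : A.PosSemidef) : Matrix n n 𝕜 :=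
  hA.1.eigenvectorUnitary.1 * diagonal ((↑) ∘ (√·) ∘ hA.1.eigenvalues) *
  (star hA.1.eigenvectorUnitary : Matrix n n 𝕜)

open scoped ComplexOrder in
lemma Matrix.PosSemidef.posSemidef_sqrt {n 𝕜 : Type*} [Fintype n] [DecidableEq n] [RCLike 𝕜]
    {A : Matrix n n 𝕜} (hA : A.PosSemidef) : hA.sqrt.PosSemidef := by
  apply Matrix.PosSemidef.mul_mul_conjTranspose_same
  refine posSemidef_diagonal_iff.mpr fun i ↦ ?_
  rw [Function.comp_apply, RCLike.nonneg_iff]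
  constructor
  · simp only [Function.comp_apply, RCLike.ofReal_re]
    exact Real.sqrt_nonneg _
  · simp only [Function.comp_apply, RCLike.ofReal_im]

open scoped ComplexOrder in
lemma Matrix.PosSemidef.sqrt_mul_self {n 𝕜 : Type*} [Fintype n] [DecidableEq n] [RCLike 𝕜]
    {A : Matrix n n 𝕜} (hA : A.PosSemidef) : hA.sqrt * hA.sqrt = A := by
  let C : Matrix n n 𝕜 := hA.1.eigenvectorUnitary
  let E := diagonal ((↑) ∘ Real.sqrt ∘ hA.1.eigenvalues : n → 𝕜)
  suffices C * (E * (star C * C) * E) * star C = A by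
    change (C * E * star C) * (C * E * star C) = A
    simpa only [← Matrix.mul_assoc] using this
  have : star C * C = 1 := by simp [C]
  rw [this, Matrix.mul_one]
  have : E * E = diagonal ((↑) ∘ hA.1.eigenvalues) := by
    rw [diagonal_mul_diagonal]
    congr! with v
    simp [← pow_two, ← RCLike.ofReal_pow, Real.sq_sqrt (hA.eigenvalues_nonneg v)]
  rw [this]
  exact hA.1.spectral_theorem.symm

lemma sqrt_le_specNorm {a b : ℕ} (M : Matrix (Fin a) (Fin b) ℝ) {e : ℝ}
    (he : Module.End.HasEigenvalue (Matrix.toLin' (Mᵀ * M)) e) :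
    Real.sqrt e ≤ specNorm M := by
  apply Real.sqrt_le_sqrt
  exact le_csSup (Module.End.finite_hasEigenvalue _).bddAbove he

lemma eig_le_one {r : ℕ} (M : Matrix (Fin r) (Fin r) ℝ) (hs : specNorm M ≤ 1)
    (hM : Mᵀ = M) {μ : ℝ} {v : Fin r → ℝ} (hv : v ≠ 0) (h : M *ᵥ v = μ • v) : μ ≤ 1 := by
  have h2 : (Mᵀ * M) *ᵥ v = (μ * μ) • v := by
    rw [hM, ← Matrix.mulVec_mulVec, h, Matrix.mulVec_smul, h, smul_smul]
  have hev : Module.End.HasEigenvalue (Matrix.toLin' (Mᵀ * M)) (μ * μ) :=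
    Module.End.hasEigenvalue_of_hasEigenvector
      ⟨Module.End.mem_eigenspace_iff.2 (by simpa [Matrix.toLin'_apply] using h2), hv⟩
  have := sqrt_le_specNorm M hev
  rw [Real.sqrt_mul_self_eq_abs] at this
  calc μ ≤ |μ| := le_abs_self μ
    _ ≤ 1 := this.trans hs

lemma one_sub_psd {r : ℕ} {M : Matrix (Fin r) (Fin r) ℝ} (hM : M.IsHermitian)
    (h : ∀ (μ : ℝ) (v : Fin r → ℝ), v ≠ 0 → M *ᵥ v = μ • v → μ ≤ 1) :
    ((1 : Matrix (Fin r) (Fin r) ℝ) - M).PosSemidef := by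
  have hev : ∀ i, hM.eigenvalues i ≤ 1 := by
    intro i
    refine h _ (hM.eigenvectorBasis i) ?_ (hM.mulVec_eigenvectorBasis i)
    intro h0
    have hne := hM.eigenvectorBasis.toBasis.ne_zero i
    simp only [OrthonormalBasis.coe_toBasis] at hne
    exact hne (by ext j; exact congrFun h0 j)
  set U : Matrix (Fin r) (Fin r) ℝ := (hM.eigenvectorUnitary : Matrix (Fin r) (Fin r) ℝ)
  have hUU : U * star U = 1 := hM.eigenvectorUnitary.2.2
  have hD : (1 : Matrix (Fin r) (Fin r) ℝ) - M =
      U * (1 - diagonal (RCLike.ofReal ∘ hM.eigenvalues)) * Uᴴ := by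
    rw [Matrix.mul_sub, Matrix.mul_one, Matrix.sub_mul, ← Matrix.star_eq_conjTranspose, hUU]
    exact congrArg (1 - ·) hM.spectral_theorem
  rw [hD]
  refine Matrix.PosSemidef.mul_mul_conjTranspose_same ?_ U
  have : (1 : Matrix (Fin r) (Fin r) ℝ) - diagonal (RCLike.ofReal ∘ hM.eigenvalues) =
      diagonal (fun i => 1 - hM.eigenvalues i) := by
    rw [← Matrix.diagonal_one, Matrix.diagonal_sub]
    congr 1
  rw [this]
  refine Matrix.posSemidef_diagonal_iff.2 fun i => ?_
  linarith [hev i]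

lemma one_sub_mul_transpose_psd {r : ℕ} (Θ : Matrix (Fin r) (Fin r) ℝ)
    (hs : specNorm (Θ * Θᵀ) ≤ 1) :
    ((1 : Matrix (Fin r) (Fin r) ℝ) - Θ * Θᵀ).PosSemidef := by
  have hH : (Θ * Θᵀ).IsHermitian := by
    have := Matrix.isHermitian_mul_conjTranspose_self Θ
    simpa [Matrix.conjTranspose_eq_transpose_of_trivial] using this
  refine one_sub_psd hH fun μ v hv h => ?_
  exact eig_le_one _ hs hH.eq hv h

lemma one_sub_transpose_mul_psd {r : ℕ} (Θ : Matrix (Fin r) (Fin r) ℝ)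
    (hs : specNorm (Θ * Θᵀ) ≤ 1) :
    ((1 : Matrix (Fin r) (Fin r) ℝ) - Θᵀ * Θ).PosSemidef := by
  have hH : (Θᵀ * Θ).IsHermitian := by
    have := Matrix.isHermitian_mul_conjTranspose_self Θᵀ
    simpa [Matrix.conjTranspose_eq_transpose_of_trivial] using this
  have hMH : (Θ * Θᵀ).IsHermitian := by
    have := Matrix.isHermitian_mul_conjTranspose_self Θ
    simpa [Matrix.conjTranspose_eq_transpose_of_trivial] using this
  refine one_sub_psd hH fun μ v hv h => ?_
  rcases eq_or_ne μ 0 with rfl | hμ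
  · norm_num
  · have hw : Θ *ᵥ v ≠ 0 := by
      intro h0
      apply hv
      have : (Θᵀ * Θ) *ᵥ v = 0 := by rw [← Matrix.mulVec_mulVec, h0, Matrix.mulVec_zero]
      rw [h] at this
      simpa [hμ] using this
    have hMw : (Θ * Θᵀ) *ᵥ (Θ *ᵥ v) = μ • (Θ *ᵥ v) := by
      rw [Matrix.mulVec_mulVec, Matrix.mul_assoc, ← Matrix.mulVec_mulVec, h,
        Matrix.mulVec_smul]
    exact eig_le_one _ hs hMH.eq hw hMw

lemma psd_smul {r : ℕ} {c : ℝ} (hc : 0 ≤ c) {M : Matrix (Fin r) (Fin r) ℝ}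
    (hM : M.PosSemidef) : (c • M).PosSemidef := by
  refine Matrix.PosSemidef.of_dotProduct_mulVec_nonneg ?_ fun x => ?_
  · rw [Matrix.IsHermitian, Matrix.conjTranspose_smul, star_trivial, hM.1]
  · rw [Matrix.smul_mulVec, dotProduct_smul, smul_eq_mul]
    exact mul_nonneg hc (hM.dotProduct_mulVec_nonneg x)

lemma psd_conj {k r : ℕ} {M : Matrix (Fin r) (Fin r) ℝ} (hM : M.PosSemidef)
    (B : Matrix (Fin k) (Fin r) ℝ) : (B * M * Bᵀ).PosSemidef := by
  have := hM.mul_mul_conjTranspose_same B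
  rwa [Matrix.conjTranspose_eq_transpose_of_trivial] at this

lemma psd_transpose_mul_self {k r : ℕ} (B : Matrix (Fin k) (Fin r) ℝ) :
    (Bᵀ * B).PosSemidef := by
  have := Matrix.posSemidef_conjTranspose_mul_self B
  rwa [Matrix.conjTranspose_eq_transpose_of_trivial] at this

lemma key_core {k r : ℕ} {B Si C : Matrix (Fin r) (Fin r) ℝ} {F : Matrix (Fin k) (Fin r) ℝ} (hBT : Bᵀ = B)
    (hBB : (1 : Matrix (Fin r) (Fin r) ℝ) - B * B = C) (hC : C.PosSemidef)
    (hSS : (1 : Matrix (Fin r) (Fin r) ℝ) - Si * Si = Fᵀ * F) :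
    ((1 : Matrix (Fin r) (Fin r) ℝ) - B * (Si * Si) * B).PosSemidef := by
  have hconj : (F * B)ᵀ * (F * B) = B * ((1 : Matrix (Fin r) (Fin r) ℝ) - Si * Si) * B := by
    rw [hSS, Matrix.transpose_mul, hBT]
    simp only [Matrix.mul_assoc]
  have hdecomp : (1 : Matrix (Fin r) (Fin r) ℝ) - B * (Si * Si) * B
      = C + (F * B)ᵀ * (F * B) := by
    rw [hconj, ← hBB, Matrix.mul_sub, Matrix.sub_mul, Matrix.mul_one]
    abel
  rw [hdecomp]
  exact hC.add (psd_transpose_mul_self (F * B))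

lemma goal_core {k r : ℕ} (Ω : Matrix (Fin k) (Fin r) ℝ) (B Si : Matrix (Fin r) (Fin r) ℝ)
    (hBT : Bᵀ = B) (hSiT : Siᵀ = Si)
    (hkey : ((1 : Matrix (Fin r) (Fin r) ℝ) - B * (Si * Si) * B).PosSemidef) :
    (Ω * Ωᵀ - (Ω * (B * Si)) * (Ω * (B * Si))ᵀ).PosSemidef := by
  have h : Ω * Ωᵀ - (Ω * (B * Si)) * (Ω * (B * Si))ᵀ
      = Ω * ((1 : Matrix (Fin r) (Fin r) ℝ) - B * (Si * Si) * B) * Ωᵀ := by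
    rw [Matrix.transpose_mul Ω (B * Si), Matrix.transpose_mul B Si, hSiT, hBT,
      Matrix.mul_sub, Matrix.sub_mul, Matrix.mul_one]
    simp only [Matrix.mul_assoc]
  rw [h]
  exact psd_conj hkey Ω

lemma one_sub_B_sq {r : ℕ} (η : ℝ) (Θ : Matrix (Fin r) (Fin r) ℝ) :
    (1 : Matrix (Fin r) (Fin r) ℝ) - (1 - η • (Θ * Θᵀ)) * (1 - η • (Θ * Θᵀ))
      = η • (Θ * ((2 - η) • (1 : Matrix (Fin r) (Fin r) ℝ)
          + η • ((1 : Matrix (Fin r) (Fin r) ℝ) - Θᵀ * Θ)) * Θᵀ) := by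
  simp only [Matrix.mul_sub, Matrix.sub_mul, Matrix.mul_add, Matrix.add_mul, Matrix.mul_one,
    Matrix.one_mul, Matrix.smul_mul, Matrix.mul_smul, smul_sub, smul_add, smul_smul,
    sub_smul, Matrix.mul_assoc]
  module


/-- One retraction-based Riemannian step does not increase the misalignment:
with `A = U Σ Vᵀ`, `U_⊥` an orthonormal basis of the orthogonal complement of the
column span of `U`, `Θ = Xᵀ A Y`, `E = −(I − XXᵀ) A Y Θᵀ`, `η ∈ (0,1)`,
`X⁺ = (X − ηE)(I + η²EᵀE)^{−1/2}`, `Ω = U_⊥ᵀ X`, `Ω⁺ = U_⊥ᵀ X⁺`, and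
`σ₁(ΘΘᵀ) ≤ 1`, we have `Ω⁺(Ω⁺)ᵀ ⪯ ΩΩᵀ`. -/
theorem misalignment_nonincreasing {m n r rA : ℕ} (hr : rA ≤ r)
    (η : ℝ) (hη0 : 0 < η) (hη1 : η < 1)
    (U : Matrix (Fin m) (Fin rA) ℝ) (hU : Uᵀ * U = 1)
    (Uperp : Matrix (Fin m) (Fin (m - rA)) ℝ) (hUperp : Uperpᵀ * Uperp = 1)
    (hcompl : U * Uᵀ + Uperp * Uperpᵀ = 1)
    (V : Matrix (Fin n) (Fin rA) ℝ) (hV : Vᵀ * V = 1)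
    (S : Matrix (Fin rA) (Fin rA) ℝ) (hSd : S.IsDiag) (hSpos : ∀ i, 0 < S i i)
    (X : Matrix (Fin m) (Fin r) ℝ) (hX : Xᵀ * X = 1)
    (Y : Matrix (Fin n) (Fin r) ℝ) (hY : Yᵀ * Y = 1)
    (A : Matrix (Fin m) (Fin n) ℝ) (hA : A = U * S * Vᵀ)
    (Θ : Matrix (Fin r) (Fin r) ℝ) (hΘ : Θ = Xᵀ * A * Y)
    (E : Matrix (Fin m) (Fin r) ℝ) (hE : E = -((1 - X * Xᵀ) * A * Y * Θᵀ))
    (hP : ((1 : Matrix (Fin r) (Fin r) ℝ) + η ^ 2 • (Eᵀ * E)).PosSemidef)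
    (hΘ1 : specNorm (Θ * Θᵀ) ≤ 1) :
    ((Uperpᵀ * X) * (Uperpᵀ * X)ᵀ -
        (Uperpᵀ * ((X - η • E) * hP.sqrt⁻¹)) *
          (Uperpᵀ * ((X - η • E) * hP.sqrt⁻¹))ᵀ).PosSemidef := by

  classical
  have hUpU : Uperpᵀ * U = 0 := by
    have h : Uperpᵀ * ((U * Uᵀ + Uperp * Uperpᵀ) * U) = Uperpᵀ * U := by
      rw [hcompl, Matrix.one_mul]
    rw [Matrix.add_mul, Matrix.mul_add, Matrix.mul_assoc U, hU, Matrix.mul_one,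
      Matrix.mul_assoc Uperp, ← Matrix.mul_assoc Uperpᵀ Uperp, hUperp, Matrix.one_mul] at h
    exact add_eq_left.mp h
  have hUpA : Uperpᵀ * A = 0 := by
    rw [hA, ← Matrix.mul_assoc, ← Matrix.mul_assoc, hUpU, Matrix.zero_mul, Matrix.zero_mul]
  have hUpE : Uperpᵀ * E = (Uperpᵀ * X) * (Θ * Θᵀ) := by
    rw [hE, Matrix.mul_neg, Matrix.sub_mul, Matrix.one_mul, Matrix.sub_mul, Matrix.sub_mul,
      Matrix.mul_sub]
    have h1 : Uperpᵀ * (A * Y * Θᵀ) = 0 := by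
      rw [← Matrix.mul_assoc, ← Matrix.mul_assoc, hUpA, Matrix.zero_mul, Matrix.zero_mul]
    rw [h1, zero_sub, neg_neg, hΘ]
    simp only [Matrix.mul_assoc]
  -- invertibility of the square root
  have hEE : ((η ^ 2) • (Eᵀ * E)).PosSemidef := psd_smul (sq_nonneg η) (psd_transpose_mul_self E)
  have hPd : ((1 : Matrix (Fin r) (Fin r) ℝ) + η ^ 2 • (Eᵀ * E)).PosDef :=
    Matrix.PosDef.add_posSemidef Matrix.PosDef.one hEE
  have hdet : hP.sqrt.det ≠ 0 := by
    have h2 : hP.sqrt.det * hP.sqrt.det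
        = ((1 : Matrix (Fin r) (Fin r) ℝ) + η ^ 2 • (Eᵀ * E)).det := by
      rw [← Matrix.det_mul, hP.sqrt_mul_self]
    intro h0
    rw [h0, mul_zero] at h2
    exact hPd.det_pos.ne' h2.symm
  have hSqSi : hP.sqrt * hP.sqrt⁻¹ = 1 := Matrix.mul_nonsing_inv _ (isUnit_iff_ne_zero.mpr hdet)
  have hSiSq : hP.sqrt⁻¹ * hP.sqrt = 1 := Matrix.nonsing_inv_mul _ (isUnit_iff_ne_zero.mpr hdet)
  have hSiH : (hP.sqrt⁻¹)ᵀ = hP.sqrt⁻¹ := by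
    have h := hP.posSemidef_sqrt.1.inv
    rwa [Matrix.IsHermitian, Matrix.conjTranspose_eq_transpose_of_trivial] at h
  have hMT : (Θ * Θᵀ)ᵀ = Θ * Θᵀ := by rw [Matrix.transpose_mul, Matrix.transpose_transpose]
  have hBT : ((1 : Matrix (Fin r) (Fin r) ℝ) - η • (Θ * Θᵀ))ᵀ
      = (1 : Matrix (Fin r) (Fin r) ℝ) - η • (Θ * Θᵀ) := by
    rw [Matrix.transpose_sub, Matrix.transpose_one, Matrix.transpose_smul, hMT]
  -- 1 - Si * Si = Fᵀ * F  with F = η • (E * Si)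
  have hSS : (1 : Matrix (Fin r) (Fin r) ℝ) - hP.sqrt⁻¹ * hP.sqrt⁻¹
      = (η • (E * hP.sqrt⁻¹))ᵀ * (η • (E * hP.sqrt⁻¹)) := by
    have e2 : hP.sqrt⁻¹ * ((hP.sqrt * hP.sqrt) * hP.sqrt⁻¹) = 1 := by
      rw [Matrix.mul_assoc hP.sqrt hP.sqrt hP.sqrt⁻¹, hSqSi, Matrix.mul_one, hSiSq]
    rw [hP.sqrt_mul_self] at e2
    have e1 : hP.sqrt⁻¹ * (((1 : Matrix (Fin r) (Fin r) ℝ) + η ^ 2 • (Eᵀ * E)) * hP.sqrt⁻¹)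
        = hP.sqrt⁻¹ * hP.sqrt⁻¹ + (η • (E * hP.sqrt⁻¹))ᵀ * (η • (E * hP.sqrt⁻¹)) := by
      rw [Matrix.add_mul, Matrix.one_mul, Matrix.mul_add]
      congr 1
      rw [Matrix.transpose_smul, Matrix.transpose_mul, hSiH, Matrix.smul_mul,
        Matrix.mul_smul, Matrix.smul_mul, Matrix.mul_smul, smul_smul, ← sq]
      congr 1
      simp only [Matrix.mul_assoc]
    have e3 := e1.symm.trans e2
    rw [sub_eq_iff_eq_add]
    exact e3.symm.trans (add_comm _ _)
  have hTT : ((1 : Matrix (Fin r) (Fin r) ℝ) - Θᵀ * Θ).PosSemidef :=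
    one_sub_transpose_mul_psd Θ hΘ1
  have hC : (η • (Θ * ((2 - η) • (1 : Matrix (Fin r) (Fin r) ℝ)
      + η • ((1 : Matrix (Fin r) (Fin r) ℝ) - Θᵀ * Θ)) * Θᵀ)).PosSemidef := by
    refine psd_smul hη0.le (psd_conj ?_ Θ)
    exact (psd_smul (by linarith) Matrix.PosSemidef.one).add (psd_smul hη0.le hTT)
  have hkey := key_core hBT (one_sub_B_sq η Θ) hC hSS
  have hplus : Uperpᵀ * ((X - η • E) * hP.sqrt⁻¹)
      = (Uperpᵀ * X) * (((1 : Matrix (Fin r) (Fin r) ℝ) - η • (Θ * Θᵀ)) * hP.sqrt⁻¹) := by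
    rw [← Matrix.mul_assoc, Matrix.mul_sub, Matrix.mul_smul, hUpE]
    simp only [Matrix.sub_mul, Matrix.mul_sub, Matrix.smul_mul, Matrix.mul_smul,
      Matrix.one_mul, Matrix.mul_assoc]
  rw [hplus]
  exact goal_core (Uperpᵀ * X) _ _ hBT hSiH hkey
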